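/- Let ω be an extended limit on ℓ∞ (a positive linear functional with ω(1)=1 vanishing on sequences tending to 0), let (r_k) be a strictly increasing unbounded sequence of nonnegative reals with multiplicities m_k ≥ 1, set Z(t) = ∑_k m_k e^{−t r_k}, and suppose Z(t) < ∞ for t > β and Z(t) → ∞ as t ↓ β. Then the functional ω̂ on ℓ∞ defined by ω̂(b) = ω( Z(β+1/n)^{−1} ∑_{k=0}^∞ (M_k b_{n_k} − M_{k−1} b_{n_{k−1}}) e^{−(β+1/n) r_k} ), where M_k = ∑_{j≤k} m_j and n_k = M_k − 1, is an extended limit: it is positive, normalized, and vanishes on sequences converging to 0. -/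

import Mathlib

open Filter Finset

/-- `M k = ∑_{j ≤ k} m j`, the cumulative multiplicity. -/
def cumMult (m : ℕ → ℕ) (k : ℕ) : ℕ := ∑ j ∈ range (k + 1), m j

/-- The partition function `Z(t) = ∑ₖ m_k e^{−t r_k}`. -/
noncomputable def partitionZ (r : ℕ → ℝ) (m : ℕ → ℕ) (t : ℝ) : ℝ :=
  ∑' k, (m k : ℝ) * Real.exp (-t * r k)

/-- The transferred functional `ω̂` of the Fröhlich-functional construction:
`ω̂(b) = ω( Z(β+1/n)⁻¹ ∑ₖ (M_k b_{M_k−1} − M_{k−1} b_{M_{k−1}−1}) e^{−(β+1/n) r_k} )`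
(the index `n` is shifted to `n+1` so that the defining sequence is everywhere defined). -/
noncomputable def frohlichTransfer (ω : (ℕ → ℝ) →ₗ[ℝ] ℝ) (r : ℕ → ℝ) (m : ℕ → ℕ)
    (β : ℝ) (b : ℕ → ℝ) : ℝ :=
  ω (fun n : ℕ =>
    (partitionZ r m (β + 1 / (n + 1)))⁻¹ *
      ∑' k : ℕ,
        ((cumMult m k : ℝ) * b (cumMult m k - 1)
          - (if k = 0 then 0 else (cumMult m (k - 1) : ℝ) * b (cumMult m (k - 1) - 1)))
        * Real.exp (-(β + 1 / (n + 1)) * r k))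

namespace FrohlichAux

lemma cumMult_succ (m : ℕ → ℕ) (k : ℕ) :
    cumMult m (k + 1) = cumMult m k + m (k + 1) := by
  simp [cumMult, Finset.sum_range_succ]

lemma cumMult_mono (m : ℕ → ℕ) : Monotone (cumMult m) := fun a b h =>
  Finset.sum_le_sum_of_subset (Finset.range_subset_range.2 (by omega))

lemma lt_cumMult (m : ℕ → ℕ) (hm : ∀ k, 1 ≤ m k) (k : ℕ) : k < cumMult m k := by
  have : ∑ j ∈ range (k + 1), 1 ≤ ∑ j ∈ range (k + 1), m j :=
    Finset.sum_le_sum fun j _ => hm j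
  simpa [cumMult] using this

lemma abel_formula (A E : ℕ → ℝ) (N : ℕ) :
    ∑ k ∈ range (N + 1), (A k - if k = 0 then 0 else A (k - 1)) * E k
      = (∑ k ∈ range N, A k * (E k - E (k + 1))) + A N * E N := by
  induction N with
  | zero => simp
  | succ N ih =>
    rw [Finset.sum_range_succ, ih, Finset.sum_range_succ]
    simp only [Nat.succ_ne_zero, if_false, Nat.add_sub_cancel]
    ring

lemma coe_sub_ite (m : ℕ → ℕ) (k : ℕ) :
    ((cumMult m k : ℝ) - if k = 0 then 0 else (cumMult m (k - 1) : ℝ)) = (m k : ℝ) := by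
  cases k with
  | zero => simp [cumMult]
  | succ s =>
    simp only [Nat.succ_ne_zero, if_false, Nat.add_sub_cancel]
    rw [cumMult_succ]
    push_cast
    ring

lemma sum_mE (m : ℕ → ℕ) (E : ℕ → ℝ) (N : ℕ) :
    ∑ k ∈ range (N + 1), (m k : ℝ) * E k
      = (∑ k ∈ range N, (cumMult m k : ℝ) * (E k - E (k + 1)))
        + (cumMult m N : ℝ) * E N := by
  calc ∑ k ∈ range (N + 1), (m k : ℝ) * E k
      = ∑ k ∈ range (N + 1),
          ((cumMult m k : ℝ) - if k = 0 then 0 else (cumMult m (k - 1) : ℝ)) * E k :=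
        (Finset.sum_congr rfl fun k _ => by rw [coe_sub_ite]).symm
    _ = _ := abel_formula (fun k => (cumMult m k : ℝ)) E N

lemma key_nonneg (m : ℕ → ℕ) (A E : ℕ → ℝ) (K : ℝ)
    (hE0 : ∀ k, 0 ≤ E k) (hEanti : ∀ k, E (k + 1) ≤ E k)
    (hK : 0 ≤ K)
    (hA0 : ∀ k, 0 ≤ A k) (hAK : ∀ k, A k ≤ K * (cumMult m k : ℝ))
    (hsum : Summable fun k => (m k : ℝ) * E k) :
    0 ≤ (∑' k, (A k - if k = 0 then 0 else A (k - 1)) * E k)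
      ∧ (∑' k, (A k - if k = 0 then 0 else A (k - 1)) * E k)
          ≤ K * ∑' k, (m k : ℝ) * E k := by
  have hmE0 : ∀ k, 0 ≤ (m k : ℝ) * E k := fun k => mul_nonneg (by positivity) (hE0 k)
  have hZ0 : 0 ≤ ∑' k, (m k : ℝ) * E k := tsum_nonneg hmE0
  have hΔ : ∀ k, 0 ≤ E k - E (k + 1) := fun k => sub_nonneg.2 (hEanti k)
  by_cases hs : Summable fun k => (A k - if k = 0 then 0 else A (k - 1)) * E k
  · have htend := hs.hasSum.tendsto_sum_nat.comp (tendsto_add_atTop_nat 1)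
    constructor
    · refine ge_of_tendsto' htend fun N => ?_
      show 0 ≤ ∑ k ∈ range (N + 1), (A k - if k = 0 then 0 else A (k - 1)) * E k
      rw [abel_formula]
      have h1 : 0 ≤ ∑ k ∈ range N, A k * (E k - E (k + 1)) :=
        Finset.sum_nonneg fun k _ => mul_nonneg (hA0 k) (hΔ k)
      have h2 : 0 ≤ A N * E N := mul_nonneg (hA0 N) (hE0 N)
      linarith
    · refine le_of_tendsto' htend fun N => ?_
      show ∑ k ∈ range (N + 1), (A k - if k = 0 then 0 else A (k - 1)) * E k ≤ _
      rw [abel_formula]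
      have h1 : ∑ k ∈ range N, A k * (E k - E (k + 1))
          ≤ ∑ k ∈ range N, K * (cumMult m k : ℝ) * (E k - E (k + 1)) :=
        Finset.sum_le_sum fun k _ => mul_le_mul_of_nonneg_right (hAK k) (hΔ k)
      have h2 : A N * E N ≤ K * (cumMult m N : ℝ) * E N :=
        mul_le_mul_of_nonneg_right (hAK N) (hE0 N)
      have h3 : (∑ k ∈ range N, K * (cumMult m k : ℝ) * (E k - E (k + 1)))
            + K * (cumMult m N : ℝ) * E N
          = K * ∑ k ∈ range (N + 1), (m k : ℝ) * E k := by
        rw [sum_mE, mul_add, Finset.mul_sum]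
        simp only [mul_assoc]
      have h4 : ∑ k ∈ range (N + 1), (m k : ℝ) * E k ≤ ∑' k, (m k : ℝ) * E k :=
        Summable.sum_le_tsum _ (fun i _ => hmE0 i) hsum
      have h5 : K * ∑ k ∈ range (N + 1), (m k : ℝ) * E k ≤ K * ∑' k, (m k : ℝ) * E k :=
        mul_le_mul_of_nonneg_left h4 hK
      linarith
  · rw [tsum_eq_zero_of_not_summable hs]
    exact ⟨le_refl 0, mul_nonneg hK hZ0⟩

lemma key_bound (m : ℕ → ℕ) (A E : ℕ → ℝ) (K ε : ℝ) (N₀ : ℕ)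
    (hE0 : ∀ k, 0 ≤ E k) (hEanti : ∀ k, E (k + 1) ≤ E k) (hE1 : E 0 ≤ 1)
    (hK : 0 ≤ K) (hε : 0 ≤ ε)
    (hAK : ∀ k, |A k| ≤ K * (cumMult m k : ℝ))
    (hAε : ∀ k, N₀ ≤ k → |A k| ≤ ε * (cumMult m k : ℝ))
    (hsum : Summable fun k => (m k : ℝ) * E k) :
    |∑' k, (A k - if k = 0 then 0 else A (k - 1)) * E k|
      ≤ K * (cumMult m N₀ : ℝ) + ε * ∑' k, (m k : ℝ) * E k := by
  have hmE0 : ∀ k, 0 ≤ (m k : ℝ) * E k := fun k => mul_nonneg (by positivity) (hE0 k)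
  have hZ0 : 0 ≤ ∑' k, (m k : ℝ) * E k := tsum_nonneg hmE0
  have hΔ : ∀ k, 0 ≤ E k - E (k + 1) := fun k => sub_nonneg.2 (hEanti k)
  by_cases hs : Summable fun k => (A k - if k = 0 then 0 else A (k - 1)) * E k
  · have htend := (hs.hasSum.tendsto_sum_nat.comp (tendsto_add_atTop_nat 1)).abs
    refine le_of_tendsto htend ?_
    filter_upwards [eventually_ge_atTop N₀] with N hN
    show |∑ k ∈ range (N + 1), (A k - if k = 0 then 0 else A (k - 1)) * E k| ≤ _
    rw [abel_formula]
    have h1 : |(∑ k ∈ range N, A k * (E k - E (k + 1))) + A N * E N|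
        ≤ (∑ k ∈ range N, |A k| * (E k - E (k + 1))) + |A N| * E N := by
      refine (abs_add_le _ _).trans (add_le_add ?_ ?_)
      · refine (Finset.abs_sum_le_sum_abs _ _).trans
          (le_of_eq (Finset.sum_congr rfl fun k _ => ?_))
        rw [abs_mul, abs_of_nonneg (hΔ k)]
      · rw [abs_mul, abs_of_nonneg (hE0 N)]
    have hsplit : ∑ k ∈ range N, |A k| * (E k - E (k + 1))
        = (∑ k ∈ range N₀, |A k| * (E k - E (k + 1)))
          + ∑ k ∈ Ico N₀ N, |A k| * (E k - E (k + 1)) := by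
      rw [Finset.range_eq_Ico, ← Finset.sum_Ico_consecutive _ (Nat.zero_le N₀) hN,
        ← Finset.range_eq_Ico]
    have h2 : ∑ k ∈ range N₀, |A k| * (E k - E (k + 1)) ≤ K * (cumMult m N₀ : ℝ) := by
      calc ∑ k ∈ range N₀, |A k| * (E k - E (k + 1))
          ≤ ∑ k ∈ range N₀, K * (cumMult m N₀ : ℝ) * (E k - E (k + 1)) := by
            refine Finset.sum_le_sum fun k hk => mul_le_mul_of_nonneg_right ((hAK k).trans ?_) (hΔ k)
            have hmono : (cumMult m k : ℝ) ≤ (cumMult m N₀ : ℝ) := by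
              exact_mod_cast cumMult_mono m (le_of_lt (Finset.mem_range.1 hk))
            exact mul_le_mul_of_nonneg_left hmono hK
        _ = K * (cumMult m N₀ : ℝ) * (E 0 - E N₀) := by
            rw [← Finset.mul_sum, Finset.sum_range_sub']
        _ ≤ K * (cumMult m N₀ : ℝ) * 1 := by
            refine mul_le_mul_of_nonneg_left ?_ (by positivity)
            have := hE0 N₀; linarith
        _ = K * (cumMult m N₀ : ℝ) := mul_one _
    have h3 : (∑ k ∈ Ico N₀ N, |A k| * (E k - E (k + 1))) + |A N| * E N
        ≤ ε * ∑' k, (m k : ℝ) * E k := by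
      have t1 : ∑ k ∈ Ico N₀ N, |A k| * (E k - E (k + 1))
          ≤ ∑ k ∈ range N, ε * ((cumMult m k : ℝ) * (E k - E (k + 1))) := by
        have t1a : ∑ k ∈ Ico N₀ N, |A k| * (E k - E (k + 1))
            ≤ ∑ k ∈ Ico N₀ N, ε * ((cumMult m k : ℝ) * (E k - E (k + 1))) :=
          Finset.sum_le_sum fun k hk =>
            (mul_le_mul_of_nonneg_right (hAε k (Finset.mem_Ico.1 hk).1) (hΔ k)).trans
              (le_of_eq (mul_assoc _ _ _))
        refine t1a.trans (Finset.sum_le_sum_of_subset_of_nonneg ?_ fun k _ _ => ?_)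
        · rw [Finset.range_eq_Ico]; exact Finset.Ico_subset_Ico (Nat.zero_le _) le_rfl
        · have hd := hΔ k
          positivity
      have t2 : |A N| * E N ≤ ε * ((cumMult m N : ℝ) * E N) := by
        rw [← mul_assoc]
        exact mul_le_mul_of_nonneg_right (hAε N hN) (hE0 N)
      calc (∑ k ∈ Ico N₀ N, |A k| * (E k - E (k + 1))) + |A N| * E N
          ≤ (∑ k ∈ range N, ε * ((cumMult m k : ℝ) * (E k - E (k + 1))))
            + ε * ((cumMult m N : ℝ) * E N) := add_le_add t1 t2
        _ = ε * ∑ k ∈ range (N + 1), (m k : ℝ) * E k := by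
            rw [sum_mE, mul_add, Finset.mul_sum]
        _ ≤ ε * ∑' k, (m k : ℝ) * E k :=
            mul_le_mul_of_nonneg_left (Summable.sum_le_tsum _ (fun i _ => hmE0 i) hsum) hε
    linarith [h1, h2, h3, hsplit]
  · rw [tsum_eq_zero_of_not_summable hs, abs_zero]
    have : 0 ≤ K * (cumMult m N₀ : ℝ) := by positivity
    nlinarith [mul_nonneg hε hZ0]


end FrohlichAux

namespace FrohlichAux

noncomputable def innerSeq (r : ℕ → ℝ) (m : ℕ → ℕ) (β : ℝ) (b : ℕ → ℝ) (n : ℕ) : ℝ :=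
  (partitionZ r m (β + 1 / (n + 1)))⁻¹ *
    ∑' k : ℕ,
      ((cumMult m k : ℝ) * b (cumMult m k - 1)
        - (if k = 0 then 0 else (cumMult m (k - 1) : ℝ) * b (cumMult m (k - 1) - 1)))
      * Real.exp (-(β + 1 / (n + 1)) * r k)

lemma frohlichTransfer_eq (ω : (ℕ → ℝ) →ₗ[ℝ] ℝ) (r : ℕ → ℝ) (m : ℕ → ℕ) (β : ℝ)
    (b : ℕ → ℝ) : frohlichTransfer ω r m β b = ω (innerSeq r m β b) := rfl

end FrohlichAux

open FrohlichAux

/-- If `ω` is an extended limit (a positive normalised linear functional on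
bounded sequences vanishing on sequences tending to `0`), `(r_k)` is a strictly increasing
unbounded sequence of nonnegative reals with multiplicities `m_k ≥ 1`,
`Z(t) = ∑ₖ m_k e^{−t r_k}` is finite for `t > β` and `Z(t) → ∞` as `t ↓ β`, then the
transferred functional `ω̂` is again an extended limit: positive on bounded nonnegative
sequences, normalised, and vanishing on sequences converging to `0`. -/
theorem frohlichTransfer_is_extended_limit
    (ω : (ℕ → ℝ) →ₗ[ℝ] ℝ)
    (hωpos : ∀ b : ℕ → ℝ, (∃ K : ℝ, ∀ n, |b n| ≤ K) → (∀ n, 0 ≤ b n) → 0 ≤ ω b)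
    (hωone : ω (fun _ => 1) = 1)
    (hωc0 : ∀ b : ℕ → ℝ, Tendsto b atTop (nhds 0) → ω b = 0)
    (r : ℕ → ℝ) (hr : StrictMono r) (hr0 : ∀ k, 0 ≤ r k)
    (hrtop : Tendsto r atTop atTop)
    (m : ℕ → ℕ) (hm : ∀ k, 1 ≤ m k)
    (β : ℝ) (hβ : 0 ≤ β)
    (hZfin : ∀ t : ℝ, β < t → Summable (fun k : ℕ => (m k : ℝ) * Real.exp (-t * r k)))
    (hZtop : Tendsto (partitionZ r m) (nhdsWithin β (Set.Ioi β)) atTop) :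
    (∀ b : ℕ → ℝ, (∃ K : ℝ, ∀ n, |b n| ≤ K) → (∀ n, 0 ≤ b n) →
        0 ≤ frohlichTransfer ω r m β b)
    ∧ frohlichTransfer ω r m β (fun _ => 1) = 1
    ∧ (∀ b : ℕ → ℝ, Tendsto b atTop (nhds 0) → frohlichTransfer ω r m β b = 0) := by
  -- basic facts about t n := β + 1/(n+1)
  have htβ : ∀ n : ℕ, β < β + 1 / ((n : ℝ) + 1) := fun n => by
    have : (0:ℝ) < 1 / ((n : ℝ) + 1) := by positivity
    linarith
  have ht0 : ∀ n : ℕ, (0:ℝ) ≤ β + 1 / ((n : ℝ) + 1) := fun n => le_of_lt (lt_of_le_of_lt hβ (htβ n))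
  -- properties of E (n) := fun k => exp(-(t n) * r k)
  have hE0 : ∀ n k : ℕ, 0 ≤ Real.exp (-(β + 1 / ((n : ℝ) + 1)) * r k) :=
    fun n k => (Real.exp_pos _).le
  have hEanti : ∀ n k : ℕ,
      Real.exp (-(β + 1 / ((n : ℝ) + 1)) * r (k + 1))
        ≤ Real.exp (-(β + 1 / ((n : ℝ) + 1)) * r k) := by
    intro n k
    apply Real.exp_le_exp.2
    have h1 : r k ≤ r (k + 1) := (hr (Nat.lt_succ_self k)).le
    nlinarith [ht0 n]
  have hE1 : ∀ n : ℕ, Real.exp (-(β + 1 / ((n : ℝ) + 1)) * r 0) ≤ 1 := by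
    intro n
    refine Real.exp_le_one_iff.2 ?_
    nlinarith [ht0 n, hr0 0]
  have hZsum : ∀ n : ℕ,
      Summable fun k => (m k : ℝ) * Real.exp (-(β + 1 / ((n : ℝ) + 1)) * r k) :=
    fun n => hZfin _ (htβ n)
  have hZpos : ∀ n : ℕ, 0 < partitionZ r m (β + 1 / ((n : ℝ) + 1)) := by
    intro n
    refine Summable.tsum_pos (hZsum n) (fun k => mul_nonneg (by positivity) (hE0 n k)) 0 ?_
    have : (1:ℝ) ≤ (m 0 : ℝ) := by exact_mod_cast hm 0
    nlinarith [Real.exp_pos (-(β + 1 / ((n : ℝ) + 1)) * r 0)]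
  refine ⟨?_, ?_, ?_⟩
  · -- positivity
    intro b ⟨K, hbK⟩ hb0
    rw [frohlichTransfer_eq]
    have hK : 0 ≤ K := le_trans (abs_nonneg _) (hbK 0)
    have hkey : ∀ n : ℕ,
        0 ≤ innerSeq r m β b n ∧ innerSeq r m β b n ≤ K := by
      intro n
      have h := key_nonneg m
        (fun k => (cumMult m k : ℝ) * b (cumMult m k - 1))
        (fun k => Real.exp (-(β + 1 / ((n : ℝ) + 1)) * r k)) K
        (hE0 n) (hEanti n) hK
        (fun k => mul_nonneg (by positivity) (hb0 _))
        (fun k => by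
          have : b (cumMult m k - 1) ≤ K := (le_abs_self _).trans (hbK _)
          calc (cumMult m k : ℝ) * b (cumMult m k - 1)
              ≤ (cumMult m k : ℝ) * K := mul_le_mul_of_nonneg_left this (by positivity)
            _ = K * (cumMult m k : ℝ) := mul_comm _ _)
        (hZsum n)
      constructor
      · exact mul_nonneg (inv_nonneg.2 (hZpos n).le) h.1
      · calc innerSeq r m β b n
            ≤ (partitionZ r m (β + 1 / ((n : ℝ) + 1)))⁻¹
              * (K * partitionZ r m (β + 1 / ((n : ℝ) + 1))) :=
            mul_le_mul_of_nonneg_left h.2 (inv_nonneg.2 (hZpos n).le)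
          _ = K := by
            rw [mul_comm K, ← mul_assoc, inv_mul_cancel₀ (hZpos n).ne', one_mul]
    refine hωpos _ ⟨K, fun n => ?_⟩ (fun n => (hkey n).1)
    rw [abs_of_nonneg (hkey n).1]
    exact (hkey n).2
  · -- normalisation
    rw [frohlichTransfer_eq]
    have : innerSeq r m β (fun _ => 1) = fun _ => 1 := by
      funext n
      have hsum_eq : (∑' k : ℕ,
          ((cumMult m k : ℝ) * (1:ℝ)
            - (if k = 0 then 0 else (cumMult m (k - 1) : ℝ) * (1:ℝ)))
          * Real.exp (-(β + 1 / ((n : ℝ) + 1)) * r k))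
          = partitionZ r m (β + 1 / ((n : ℝ) + 1)) := by
        refine tsum_congr fun k => ?_
        simp only [mul_one]
        rw [coe_sub_ite]
      show (partitionZ r m (β + 1 / ((n : ℝ) + 1)))⁻¹ * _ = (1:ℝ)
      rw [hsum_eq]
      exact inv_mul_cancel₀ (hZpos n).ne'
    rw [this, hωone]
  · -- vanishing on c₀
    intro b hb
    rw [frohlichTransfer_eq]
    refine hωc0 _ ?_
    -- b is bounded
    obtain ⟨K, hK⟩ := (hb.abs.bddAbove_range)
    have hbK : ∀ n, |b n| ≤ K := fun n => hK ⟨n, rfl⟩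
    have hK0 : 0 ≤ K := le_trans (abs_nonneg _) (hbK 0)
    -- Z(t n) → ∞
    have h_t : Tendsto (fun n : ℕ => β + 1 / ((n : ℝ) + 1)) atTop
        (nhdsWithin β (Set.Ioi β)) := by
      apply tendsto_nhdsWithin_of_tendsto_nhds_of_eventually_within
      · have h1 : Tendsto (fun n : ℕ => 1 / ((n : ℝ) + 1)) atTop (nhds 0) :=
          tendsto_one_div_add_atTop_nhds_zero_nat
        simpa using tendsto_const_nhds.add h1
      · exact Filter.Eventually.of_forall fun n => htβ n
    have hZtend : Tendsto (fun n : ℕ => partitionZ r m (β + 1 / ((n : ℝ) + 1)))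
        atTop atTop := hZtop.comp h_t
    rw [Metric.tendsto_atTop]
    intro ε hε
    -- tail bound on b
    obtain ⟨N₀, hN₀⟩ := (Metric.tendsto_atTop.1 hb (ε / 3) (by positivity))
    have htail : ∀ j, N₀ ≤ j → |b j| ≤ ε / 3 := by
      intro j hj
      have := hN₀ j hj
      rw [Real.dist_eq, sub_zero] at this
      exact this.le
    set C : ℝ := K * (cumMult m N₀ : ℝ) with hC
    have hC0 : 0 ≤ C := by positivity
    -- pointwise bound on innerSeq
    have hbound : ∀ n : ℕ, |innerSeq r m β b n|
        ≤ C / partitionZ r m (β + 1 / ((n : ℝ) + 1)) + ε / 3 := by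
      intro n
      have h := key_bound m
        (fun k => (cumMult m k : ℝ) * b (cumMult m k - 1))
        (fun k => Real.exp (-(β + 1 / ((n : ℝ) + 1)) * r k)) K (ε / 3) N₀
        (hE0 n) (hEanti n) (hE1 n) hK0 (by positivity)
        (fun k => by
          rw [abs_mul, Nat.abs_cast, mul_comm]
          exact mul_le_mul_of_nonneg_right (hbK _) (by positivity))
        (fun k hk => by
          rw [abs_mul, Nat.abs_cast, mul_comm]
          refine mul_le_mul_of_nonneg_right (htail _ ?_) (by positivity)
          have := lt_cumMult m hm k
          omega)
        (hZsum n)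
      have hZn := hZpos n
      calc |innerSeq r m β b n|
          = (partitionZ r m (β + 1 / ((n : ℝ) + 1)))⁻¹ * |∑' k : ℕ,
              ((cumMult m k : ℝ) * b (cumMult m k - 1)
                - (if k = 0 then 0 else (cumMult m (k - 1) : ℝ) * b (cumMult m (k - 1) - 1)))
              * Real.exp (-(β + 1 / ((n : ℝ) + 1)) * r k)| := by
            rw [innerSeq, abs_mul, abs_of_pos (inv_pos.2 hZn)]
        _ ≤ (partitionZ r m (β + 1 / ((n : ℝ) + 1)))⁻¹
            * (C + ε / 3 * partitionZ r m (β + 1 / ((n : ℝ) + 1))) :=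
            mul_le_mul_of_nonneg_left h (inv_nonneg.2 hZn.le)
        _ = C / partitionZ r m (β + 1 / ((n : ℝ) + 1)) + ε / 3 := by
            rw [mul_add]
            congr 1
            · rw [inv_mul_eq_div]
            · rw [mul_comm (ε / 3), ← mul_assoc,
                inv_mul_cancel₀ (hZpos n).ne', one_mul]
    -- choose N₁ with Z large
    obtain ⟨N₁, hN₁⟩ := eventually_atTop.1 (tendsto_atTop.1 hZtend (3 * (C + 1) / ε))
    refine ⟨N₁, fun n hn => ?_⟩
    rw [Real.dist_eq, sub_zero]
    have hZn := hZpos n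
    have hD := hN₁ n hn
    have hDpos : (0:ℝ) < 3 * (C + 1) / ε := by positivity
    have h1 : C / partitionZ r m (β + 1 / ((n : ℝ) + 1)) ≤ C / (3 * (C + 1) / ε) := by
      gcongr
    have h2 : C / (3 * (C + 1) / ε) < ε / 3 := by
      rw [div_lt_iff₀ hDpos]
      have he : ε / 3 * (3 * (C + 1) / ε) = C + 1 := by
        field_simp
      rw [he]
      linarith
    have := hbound n
    linarith
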